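/- Let F : C ⥤ X be a faithful essential localization with left adjoint H and counit θ of the adjunction H ⊣ F, and assume that every epimorphism in X is split. Then for every object C of C, the counit component θ_C : HF(C) ⟶ C is a projective cover of C: θ_C is an essential epimorphism and HF(C) is a projective object of C. In particular, C is a projective object if and only if θ_C is an isomorphism. -/

import Mathlib

open CategoryTheory Limits

/-- A morphism `e` is an essential epimorphism if it is an epimorphism and every
morphism `f` such that `f ≫ e` is an epimorphism is itself an epimorphism. -/
def IsEssentialEpi {C : Type*} [CategoryTheory.Category C] {A B : C} (e : A ⟶ B) : Prop :=
  CategoryTheory.Epi e ∧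
    ∀ ⦃Z : C⦄ (f : Z ⟶ A), CategoryTheory.Epi (f ≫ e) → CategoryTheory.Epi f

/-- Let `F : C ⥤ X` be a faithful essential localization with left adjoint `H` and
counit `θ` of the adjunction `H ⊣ F`, and assume that every epimorphism in `X` is split.
Then for every object `c` of `C`, the counit component `θ_c : HF(c) ⟶ c` is a projective
cover of `c`: it is an essential epimorphism from a projective object. In particular,
`c` is projective if and only if `θ_c` is an isomorphism. -/
theorem counit_projectiveCover
    {C : Type*} [Category C] {X : Type*} [Category X]
    [HasFiniteLimits C] [HasFiniteLimits X]
    [HasFiniteColimits C] [HasFiniteColimits X]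
    (F : C ⥤ X) (G : X ⥤ C) (H : X ⥤ C)
    (adj : F ⊣ G) [PreservesFiniteLimits F] [F.Faithful] [G.Full] [G.Faithful]
    (adj' : H ⊣ F)
    (hsplit : ∀ ⦃A B : X⦄ (f : A ⟶ B), Epi f → IsSplitEpi f)
    (c : C) :
    IsEssentialEpi (adj'.counit.app c) ∧ Projective (H.obj (F.obj c)) ∧
      (Projective c ↔ IsIso (adj'.counit.app c)) := by
  have hFleft : F.IsLeftAdjoint := adj.isLeftAdjoint
  -- the unit of `H ⊣ F` is an isomorphism (adjoint triple `H ⊣ F ⊣ G`, `G` fully faithful)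
  have hunit : IsIso adj'.unit := ((Adjunction.Triple.mk adj' adj).isIso_unit_iff_isIso_counit).mpr inferInstance
  -- hence `F (θ_c)` is an isomorphism, by the triangle identity
  have hFθ : IsIso (F.map (adj'.counit.app c)) := by
    have h1 : IsIso (adj'.unit.app (F.obj c) ≫ F.map (adj'.counit.app c)) := by
      rw [adj'.right_triangle_components]; exact IsIso.id _
    exact IsIso.of_isIso_comp_left (adj'.unit.app (F.obj c)) _
  -- `θ_c` is an epimorphism
  have hθepi : Epi (adj'.counit.app c) := F.epi_of_epi_map (by infer_instance)
  -- `θ_c` is an essential epimorphism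
  have hess : IsEssentialEpi (adj'.counit.app c) := by
    refine ⟨hθepi, fun Z f hf => ?_⟩
    apply F.epi_of_epi_map
    have h1 : Epi (F.map (f ≫ adj'.counit.app c)) := F.map_epi _
    rw [F.map_comp] at h1
    have h2 : Epi ((F.map f ≫ F.map (adj'.counit.app c)) ≫
        inv (F.map (adj'.counit.app c))) := epi_comp _ _
    simpa using h2
  -- `HF(c)` is projective
  have hproj : Projective (H.obj (F.obj c)) := by
    constructor
    intro E Y f e he
    have hFe : Epi (F.map e) := F.map_epi e
    obtain ⟨s, hs⟩ := (hsplit (F.map e) hFe).exists_splitEpi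
    refine ⟨(adj'.homEquiv _ _).symm (adj'.homEquiv _ _ f ≫ s), ?_⟩
    rw [← Adjunction.homEquiv_naturality_right_symm]
    rw [Category.assoc, hs, Category.comp_id, Equiv.symm_apply_apply]
  refine ⟨hess, hproj, ?_, fun h => ?_⟩
  · intro hc
    obtain ⟨s, hs⟩ := hc.factors (𝟙 c) (adj'.counit.app c)
    have hsepi : Epi s := hess.2 s (by rw [hs]; infer_instance)
    have : IsSplitMono s := IsSplitMono.mk' ⟨adj'.counit.app c, hs⟩
    have hsiso : IsIso s := isIso_of_epi_of_isSplitMono s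
    have h1 : IsIso (s ≫ adj'.counit.app c) := by rw [hs]; infer_instance
    exact IsIso.of_isIso_comp_left s _
  · exact Projective.of_iso (asIso (adj'.counit.app c)) hproj
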